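/- Let R be a real orthogonal n×n matrix and let x₀, x_* ∈ ℝ^n with x₀ - x_* orthogonal to the eigenspace of R for eigenvalue 1. Suppose the eigenvalues of R are e^{iθ_l} with |θ_l| ≤ π. Then the averages (1/N) Σ_{j=0}^{N-1} (x_* + R^j(x₀ - x_*)) converge to x_* as N → ∞, with ‖(1/N) Σ_{j=0}^{N-1} R^j (x₀ - x_*)‖ ≤ (π/(N · min_{θ_l ≠ 0} |θ_l|)) ‖x₀ - x_*‖. -/

import Mathlib

open Matrix Polynomial

lemma charpoly_eval_complex {n : ℕ} (M : Matrix (Fin n) (Fin n) ℂ) (x : ℂ) :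
    M.charpoly.eval x = (x • (1 : Matrix (Fin n) (Fin n) ℂ) - M).det := by
  rw [Matrix.charpoly, ← Polynomial.coe_evalRingHom, RingHom.map_det]
  congr 1
  ext i j
  by_cases h : i = j <;>
    simp [Matrix.charmatrix_apply, Matrix.one_apply, Matrix.diagonal_apply, h, Matrix.smul_apply]

lemma eig_form {n : ℕ} (R : Matrix (Fin n) (Fin n) ℝ) (hR : R * Rᵀ = 1)
    (θ : Fin n → ℝ)
    (hev : (R.map (Complex.ofReal)).charpoly =
      ∏ l, (Polynomial.X - Polynomial.C (Complex.exp (θ l * Complex.I))))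
    (μ : ℝ) (hdet : ((2 - μ) • (1 : Matrix (Fin n) (Fin n) ℝ) - R - Rᵀ).det = 0) :
    ∃ l, μ = 2 - 2 * Real.cos (θ l) := by
  classical
  set S : Matrix (Fin n) (Fin n) ℂ := R.map Complex.ofReal with hSdef
  have hmap : ∀ M : Matrix (Fin n) (Fin n) ℝ, M.map Complex.ofReal = M.map Complex.ofRealHom := by
    intro M; rfl
  have hS : S * Sᵀ = 1 := by
    rw [hSdef, hmap, ← Matrix.transpose_map, ← Matrix.map_mul, hR, Matrix.map_one]
    · exact Complex.ofRealHom.map_zero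
    · exact Complex.ofRealHom.map_one
  have hdetS : S.det ≠ 0 := by
    have h := congrArg Matrix.det hS
    rw [Matrix.det_mul, Matrix.det_transpose, Matrix.det_one] at h
    intro h0; rw [h0, zero_mul] at h; exact zero_ne_one h
  have hdetℂ : ((2 - (μ:ℂ)) • (1 : Matrix (Fin n) (Fin n) ℂ) - S - Sᵀ).det = 0 := by
    have := congrArg Complex.ofRealHom hdet
    rw [RingHom.map_det] at this
    rw [Complex.ofRealHom.map_zero] at this  -- RHS
    rw [← this]
    congr 1
    ext i j
    by_cases h : i = j <;>
      simp [Matrix.map_apply, Matrix.sub_apply, Matrix.smul_apply, Matrix.one_apply, h,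
        Matrix.transpose_apply, hSdef]
  obtain ⟨w, hw⟩ := IsAlgClosed.exists_pow_nat_eq ((2 - (μ:ℂ))^2 - 4) (n := 2) (by norm_num)
  set α : ℂ := ((2 - μ) + w) / 2 with hα
  set β : ℂ := ((2 - μ) - w) / 2 with hβ
  have hsum : α + β = 2 - μ := by rw [hα, hβ]; ring
  have hprod : α * β = 1 := by rw [hα, hβ]; linear_combination (-1/4 : ℂ) * hw
  have factor : S * ((2 - (μ:ℂ)) • 1 - S - Sᵀ) = -((S - α • 1) * (S - β • 1)) := by
    have expand : (S - α • 1) * (S - β • 1) = S * S - (α + β) • S + (α * β) • 1 := by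
      simp only [Matrix.mul_sub, Matrix.sub_mul, Matrix.smul_mul, Matrix.mul_smul,
        Matrix.one_mul, Matrix.mul_one, smul_smul, add_smul, smul_sub]
      rw [mul_comm β α]
      abel
    rw [expand, hsum, hprod]
    rw [Matrix.mul_sub, Matrix.mul_sub, Matrix.mul_smul, Matrix.mul_one, hS]
    simp only [one_smul]
    abel
  have h0 : (-(1:ℂ))^n * ((S - α • 1).det * (S - β • 1).det) = 0 := by
    have := congrArg Matrix.det factor
    rw [Matrix.det_mul, hdetℂ, mul_zero, Matrix.det_neg, Fintype.card_fin, Matrix.det_mul]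
      at this
    exact this.symm
  have h1 : (S - α • 1).det = 0 ∨ (S - β • 1).det = 0 := by
    rcases mul_eq_zero.mp h0 with h | h
    · exact absurd h (by simp)
    · exact mul_eq_zero.mp h
  -- get γ ∈ {α, β} which is eigenvalue of S
  have key : ∀ γ : ℂ, (S - γ • 1).det = 0 → ∃ l, γ = Complex.exp (θ l * Complex.I) := by
    intro γ hγ
    have hγ' : (γ • (1 : Matrix (Fin n) (Fin n) ℂ) - S).det = 0 := by
      have : γ • (1 : Matrix (Fin n) (Fin n) ℂ) - S = -(S - γ • 1) := by abel
      rw [this, Matrix.det_neg, hγ, mul_zero]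
    have := charpoly_eval_complex S γ
    rw [hγ', hev] at this
    rw [Polynomial.eval_prod] at this
    obtain ⟨l, -, hl⟩ := Finset.prod_eq_zero_iff.mp this
    refine ⟨l, ?_⟩
    simpa [sub_eq_zero] using hl
  -- both α and β are roots of z^2 - (2-μ)z + 1
  have hroot : ∀ γ : ℂ, γ = α ∨ γ = β → γ ^ 2 - (2 - μ) * γ + 1 = 0 := by
    rintro γ (rfl | rfl)
    · rw [hα]; linear_combination hw / 4
    · rw [hβ]; linear_combination hw / 4
  have hmain : ∃ l, Complex.exp (θ l * Complex.I) ^ 2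
      - (2 - μ) * Complex.exp (θ l * Complex.I) + 1 = 0 := by
    rcases h1 with h | h
    · obtain ⟨l, hl⟩ := key α h
      exact ⟨l, by rw [← hl]; exact hroot α (Or.inl rfl)⟩
    · obtain ⟨l, hl⟩ := key β h
      exact ⟨l, by rw [← hl]; exact hroot β (Or.inr rfl)⟩
  obtain ⟨l, hl⟩ := hmain
  refine ⟨l, ?_⟩
  have hexp : Complex.exp (θ l * Complex.I) ≠ 0 := Complex.exp_ne_zero _
  have h2 : Complex.exp (θ l * Complex.I) + Complex.exp (-(θ l * Complex.I)) = 2 - μ := by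
    rw [Complex.exp_neg]
    field_simp
    linear_combination hl
  rw [Complex.exp_mul_I, ← neg_mul, Complex.exp_mul_I] at h2
  rw [Complex.cos_neg, Complex.sin_neg] at h2
  have h3 : 2 * Complex.cos ((θ l : ℝ) : ℂ) = 2 - μ := by linear_combination h2
  exact Complex.ofReal_inj.mp (by push_cast; linear_combination h3)

section Helpers

variable {n : ℕ}

def toE {n : ℕ} (v : Fin n → ℝ) : EuclideanSpace ℝ (Fin n) := WithLp.toLp 2 v

lemma inner_dot (x y : EuclideanSpace ℝ (Fin n)) :
    (inner ℝ x y : ℝ) = ∑ i, x i * y i := by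
  simp [PiLp.inner_apply, RCLike.inner_apply, starRingEnd_apply, mul_comm]

lemma inner_mulVec (M : Matrix (Fin n) (Fin n) ℝ) (x y : EuclideanSpace ℝ (Fin n)) :
    (inner ℝ (toE (M *ᵥ x)) y : ℝ) = inner ℝ x (toE (Mᵀ *ᵥ y)) := by
  rw [inner_dot, inner_dot]
  show ∑ i, (M *ᵥ (x : Fin n → ℝ)) i * y i = ∑ i, x i * (Mᵀ *ᵥ (y : Fin n → ℝ)) i
  have h1 : ∀ (a b : Fin n → ℝ), ∑ i, a i * b i = a ⬝ᵥ b := fun a b => rfl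
  rw [h1, h1, Matrix.mulVec_transpose, dotProduct_comm, dotProduct_mulVec,
    dotProduct_comm]

lemma isometry_dot {R : Matrix (Fin n) (Fin n) ℝ} (hR : R * Rᵀ = 1)
    (x y : EuclideanSpace ℝ (Fin n)) :
    (inner ℝ (toE (R *ᵥ x)) (toE (R *ᵥ y)) : ℝ) = inner ℝ x y := by
  rw [inner_mulVec]
  have h2 : Rᵀ *ᵥ (R *ᵥ (y : Fin n → ℝ)) = (Rᵀ * R) *ᵥ y := Matrix.mulVec_mulVec _ _ _
  show (inner ℝ x (toE (Rᵀ *ᵥ (R *ᵥ (y : Fin n → ℝ)))) : ℝ) = inner ℝ x y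
  rw [h2, mul_eq_one_comm.mp hR, Matrix.one_mulVec]
  rfl

end Helpers

set_option maxHeartbeats 2000000 in
/-- if `R` is orthogonal with eigenvalues `e^{iθ_l}` (`|θ_l| ≤ π`)
and `x₀ - x_*` is orthogonal to the fixed space of `R`, then the averages
`(1/N) Σ_{j<N} (x_* + R^j(x₀ - x_*))` converge to `x_*`, with the quantitative
bound `‖(1/N) Σ_{j<N} R^j(x₀-x_*)‖ ≤ (π/(N·min_{θ_l≠0}|θ_l|))‖x₀-x_*‖`. -/
theorem average_converges_to_center (n : ℕ)
    (R : Matrix (Fin n) (Fin n) ℝ) (hR : R * Rᵀ = 1)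
    (θ : Fin n → ℝ) (hθ : ∀ l, |θ l| ≤ Real.pi)
    (hev : (R.map (Complex.ofReal)).charpoly =
      ∏ l, (Polynomial.X - Polynomial.C (Complex.exp (θ l * Complex.I))))
    (x0 xstar : EuclideanSpace ℝ (Fin n))
    (horth : ∀ w : EuclideanSpace ℝ (Fin n), R.mulVec w = w →
      (inner ℝ (x0 - xstar) w : ℝ) = 0) :
    Filter.Tendsto
      (fun N : ℕ => (1 / (N : ℝ)) •
        ∑ j ∈ Finset.range N, (xstar + toE ((R ^ j).mulVec (x0 - xstar))))
      Filter.atTop (nhds xstar) ∧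
    ∀ c : ℝ, 0 < c → (∀ l, θ l ≠ 0 → c ≤ |θ l|) → ∀ N : ℕ, 1 ≤ N →
      ‖(1 / (N : ℝ)) • toE (∑ j ∈ Finset.range N, (R ^ j).mulVec (x0 - xstar))‖ ≤
        (Real.pi / ((N : ℝ) * c)) * ‖x0 - xstar‖ := by
  classical
  set v : EuclideanSpace ℝ (Fin n) := x0 - xstar with hv
  set T : EuclideanSpace ℝ (Fin n) →ₗ[ℝ] EuclideanSpace ℝ (Fin n) := Matrix.toEuclideanLin R
    with hT
  have hTapp : ∀ x : EuclideanSpace ℝ (Fin n), T x = toE (R *ᵥ x) := fun _ => rfl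
  have hTpow : ∀ (j : ℕ) (x : EuclideanSpace ℝ (Fin n)), (T ^ j) x = toE ((R ^ j) *ᵥ x) := by
    intro j
    induction j with
    | zero => intro x; show x = toE ((1 : Matrix (Fin n) (Fin n) ℝ) *ᵥ x); rw [Matrix.one_mulVec]; rfl
    | succ j ih =>
      intro x
      rw [pow_succ', Module.End.mul_apply, hTapp, ih x]
      show toE (R *ᵥ (R ^ j *ᵥ (x : Fin n → ℝ))) = toE (R ^ (j + 1) *ᵥ x)
      rw [Matrix.mulVec_mulVec, ← pow_succ']
  have hinner : ∀ x y : EuclideanSpace ℝ (Fin n), (inner ℝ (T x) (T y) : ℝ) = inner ℝ x y :=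
    fun x y => isometry_dot hR x y
  have hTnorm : ∀ x : EuclideanSpace ℝ (Fin n), ‖T x‖ = ‖x‖ := by
    intro x
    have h := hinner x x
    rw [real_inner_self_eq_norm_sq, real_inner_self_eq_norm_sq] at h
    nlinarith [norm_nonneg (T x), norm_nonneg x]
  have hTpownorm : ∀ (j : ℕ) (x : EuclideanSpace ℝ (Fin n)), ‖(T ^ j) x‖ = ‖x‖ := by
    intro j
    induction j with
    | zero => intro x; simp
    | succ j ih => intro x; rw [pow_succ', Module.End.mul_apply, hTnorm, ih]
  set K : Submodule ℝ (EuclideanSpace ℝ (Fin n)) := LinearMap.ker (LinearMap.id - T) with hK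
  have hKmem : ∀ w : EuclideanSpace ℝ (Fin n), w ∈ K ↔ T w = w := by
    intro w
    simp only [hK, LinearMap.mem_ker, LinearMap.sub_apply, LinearMap.id_apply, sub_eq_zero]
    exact ⟨fun h => h.symm, fun h => h.symm⟩
  have hvK : v ∈ Kᗮ := by
    rw [Submodule.mem_orthogonal]
    intro w hw
    rw [real_inner_comm]
    exact horth w (congrArg WithLp.ofLp ((hKmem w).mp hw))
  have hmaps : ∀ x : EuclideanSpace ℝ (Fin n), x - T x ∈ Kᗮ := by
    intro x
    rw [Submodule.mem_orthogonal]
    intro w hw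
    have hTw := (hKmem w).mp hw
    have h3 : (inner ℝ w x : ℝ) = inner ℝ w (T x) := by
      conv_lhs => rw [← hinner w x, hTw]
    rw [inner_sub_right, ← h3, sub_self]
  obtain ⟨u, huK, hu⟩ : ∃ u : EuclideanSpace ℝ (Fin n), u ∈ Kᗮ ∧ u - T u = v := by
    set S' : EuclideanSpace ℝ (Fin n) →ₗ[ℝ] EuclideanSpace ℝ (Fin n) := LinearMap.id - T
      with hS'
    have hmaps' : ∀ x ∈ Kᗮ, S' x ∈ Kᗮ := fun x _ => by
      simpa [hS'] using hmaps x
    have hinj : Function.Injective (S'.restrict hmaps') := by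
      rw [← LinearMap.ker_eq_bot, Submodule.eq_bot_iff]
      rintro ⟨x, hx⟩ hx0
      have hxK : x ∈ K := congrArg Subtype.val hx0
      have hx00 : x = 0 := by
        have := (Submodule.mem_orthogonal K x).mp hx x hxK
        exact inner_self_eq_zero.mp this
      simp only [Submodule.mk_eq_zero]
      exact hx00
    obtain ⟨u', hu'⟩ := (LinearMap.injective_iff_surjective).mp hinj ⟨v, hvK⟩
    refine ⟨u'.val, u'.property, ?_⟩
    have := congrArg Subtype.val hu'
    simpa [hS'] using this
  have htel : ∀ N : ℕ, ∑ j ∈ Finset.range N, (T ^ j) v = u - (T ^ N) u := by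
    intro N
    have h4 : ∀ j : ℕ, (T ^ j) v = (T ^ j) u - (T ^ (j + 1)) u := by
      intro j
      rw [← hu, map_sub, pow_succ, Module.End.mul_apply]
    calc ∑ j ∈ Finset.range N, (T ^ j) v
        = ∑ j ∈ Finset.range N, ((T ^ j) u - (T ^ (j + 1)) u) :=
          Finset.sum_congr rfl fun j _ => h4 j
      _ = u - (T ^ N) u := by rw [Finset.sum_range_sub' (fun j => (T ^ j) u)]; simp
  have hsum_bound : ∀ N : ℕ, ‖∑ j ∈ Finset.range N, (T ^ j) v‖ ≤ 2 * ‖u‖ := by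
    intro N
    rw [htel N]
    calc ‖u - (T ^ N) u‖ ≤ ‖u‖ + ‖(T ^ N) u‖ := norm_sub_le _ _
      _ = 2 * ‖u‖ := by rw [hTpownorm N u]; ring
  have hsumE : ∀ N : ℕ,
      toE (∑ j ∈ Finset.range N, (R ^ j).mulVec v) = ∑ j ∈ Finset.range N, (T ^ j) v := by
    intro N
    rw [show toE (∑ j ∈ Finset.range N, (R ^ j).mulVec v) = ∑ j ∈ Finset.range N, toE ((R ^ j) *ᵥ v)
      from WithLp.toLp_sum _ _ _ _]
    exact Finset.sum_congr rfl fun j _ => (hTpow j v).symm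
  constructor
  · -- convergence part
    have hz : Filter.Tendsto
        (fun N : ℕ => (1 / (N : ℝ)) • ∑ j ∈ Finset.range N, (T ^ j) v)
        Filter.atTop (nhds 0) := by
      apply squeeze_zero_norm (a := fun N : ℕ => (2 * ‖u‖) / N)
      · intro N
        rw [norm_smul]
        calc ‖(1 / (N:ℝ))‖ * ‖∑ j ∈ Finset.range N, (T ^ j) v‖
            ≤ ‖(1 / (N:ℝ))‖ * (2 * ‖u‖) :=
              mul_le_mul_of_nonneg_left (hsum_bound N) (norm_nonneg _)
          _ = (2 * ‖u‖) / N := by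
              rw [Real.norm_eq_abs, abs_of_nonneg (by positivity)]
              ring
      · exact tendsto_const_div_atTop_nhds_zero_nat (2 * ‖u‖)
    have hz' : Filter.Tendsto
        (fun N : ℕ => xstar + (1 / (N : ℝ)) • ∑ j ∈ Finset.range N, (T ^ j) v)
        Filter.atTop (nhds xstar) := by
      have := hz.const_add xstar
      simpa using this
    apply hz'.congr'
    filter_upwards [Filter.eventually_ge_atTop 1] with N hN
    have hN0 : (N : ℝ) ≠ 0 := by
      simp only [ne_eq, Nat.cast_eq_zero]
      omega
    rw [Finset.sum_add_distrib, smul_add, Finset.sum_const, Finset.card_range,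
      ← Nat.cast_smul_eq_nsmul ℝ, smul_smul, one_div, inv_mul_cancel₀ hN0, one_smul]
    congr 1
    exact congrArg _ (Finset.sum_congr rfl fun j _ => (hTpow j v))
  · -- quantitative bound
    intro c hc hmin N hN
    -- spectral setup
    set A : Matrix (Fin n) (Fin n) ℝ := (2:ℝ) • 1 - R - Rᵀ with hA
    set B : EuclideanSpace ℝ (Fin n) →ₗ[ℝ] EuclideanSpace ℝ (Fin n) := Matrix.toEuclideanLin A
      with hB
    have hBapp : ∀ x : EuclideanSpace ℝ (Fin n),
        B x = (2:ℝ) • x - T x - toE (Rᵀ *ᵥ x) := by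
      intro x
      show toE (A *ᵥ x) = _
      rw [hA, Matrix.sub_mulVec, Matrix.sub_mulVec, Matrix.smul_mulVec, Matrix.one_mulVec]
      rfl
    have hAT : Aᵀ = A := by
      rw [hA]
      simp [Matrix.transpose_sub, Matrix.transpose_smul, Matrix.transpose_one]
      abel
    have hBsymm : LinearMap.IsSymmetric B := by
      intro x y
      show (inner ℝ (toE (A *ᵥ x)) y : ℝ) = inner ℝ x (toE (A *ᵥ y))
      rw [inner_mulVec, hAT]
    have hBquad : ∀ x : EuclideanSpace ℝ (Fin n), (inner ℝ (B x) x : ℝ) = ‖x - T x‖ ^ 2 := by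
      intro x
      have h1 : (inner ℝ (toE (Rᵀ *ᵥ x)) x : ℝ) = inner ℝ x (T x) := by
        have h2 := inner_mulVec Rᵀ x x
        rw [Matrix.transpose_transpose] at h2
        exact h2
      rw [hBapp, inner_sub_left, inner_sub_left, real_inner_smul_left, h1]
      rw [norm_sub_sq_real, hTnorm, real_inner_self_eq_norm_sq]
      have h5 : (inner ℝ (T x) x : ℝ) = inner ℝ x (T x) := real_inner_comm _ _
      rw [h5]
      ring
    have hn' : Module.finrank ℝ (EuclideanSpace ℝ (Fin n)) = n := finrank_euclideanSpace_fin
    set e := hBsymm.eigenvectorBasis hn' with he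
    set μ := hBsymm.eigenvalues hn' with hμ
    have heig : ∀ i, B (e i) = μ i • e i := fun i => hBsymm.apply_eigenvectorBasis hn' i
    have hμform : ∀ i, ∃ l, μ i = 2 - 2 * Real.cos (θ l) := by
      intro i
      apply eig_form R hR θ hev
      rw [← Matrix.exists_mulVec_eq_zero_iff]
      refine ⟨e i, ?_, ?_⟩
      · intro h0
        exact e.toBasis.ne_zero i (by simpa [toE] using congrArg toE h0)
      · have h1 : (2:ℝ) • (e i) - T (e i) - toE (Rᵀ *ᵥ (e i)) = μ i • (e i) := by
          rw [← hBapp]; exact heig i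
        suffices h : toE (((2 - μ i) • 1 - R - Rᵀ) *ᵥ (e i)) = 0 by
          simpa [toE] using congrArg WithLp.ofLp h
        rw [Matrix.sub_mulVec, Matrix.sub_mulVec, Matrix.smul_mulVec, Matrix.one_mulVec]
        show ((2:ℝ) - μ i) • (e i : EuclideanSpace ℝ (Fin n)) - T (e i)
          - toE (Rᵀ *ᵥ (e i)) = (0 : EuclideanSpace ℝ (Fin n))
        rw [sub_smul]
        calc (2:ℝ) • (e i : EuclideanSpace ℝ (Fin n)) - μ i • (e i) - T (e i)
              - toE (Rᵀ *ᵥ (e i))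
            = ((2:ℝ) • (e i : EuclideanSpace ℝ (Fin n)) - T (e i) - toE (Rᵀ *ᵥ (e i)))
              - μ i • (e i) := by abel
          _ = μ i • (e i : EuclideanSpace ℝ (Fin n)) - μ i • (e i) := by rw [h1]
          _ = 0 := sub_self _
    have hKe : ∀ i, μ i = 0 → (e i : EuclideanSpace ℝ (Fin n)) ∈ K := by
      intro i h0
      rw [hKmem]
      have h1 := hBquad (e i)
      rw [heig i, h0, zero_smul, inner_zero_left] at h1
      have h2 : (e i : EuclideanSpace ℝ (Fin n)) - T (e i) = 0 := by
        have := h1.symm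
        rw [pow_eq_zero_iff (two_ne_zero)] at this
        exact norm_eq_zero.mp this
      rw [sub_eq_zero] at h2
      exact h2.symm
    by_cases hcπ : c ≤ Real.pi
    · -- main case
      have hsin : c / Real.pi ≤ Real.sin (c / 2) := by
        have := Real.mul_le_sin (x := c / 2) (by linarith) (by linarith)
        calc c / Real.pi = 2 / Real.pi * (c / 2) := by
              field_simp
            _ ≤ Real.sin (c / 2) := this
      have hsinpos : 0 < Real.sin (c / 2) :=
        lt_of_lt_of_le (div_pos hc Real.pi_pos) hsin
      set m : ℝ := 2 - 2 * Real.cos c with hm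
      have hm4 : m = (2 * Real.sin (c / 2)) ^ 2 := by
        have h1 : Real.cos c = 1 - 2 * Real.sin (c / 2) ^ 2 := by
          have h2 := Real.cos_two_mul' (c / 2)
          rw [show 2 * (c / 2) = c by ring] at h2
          nlinarith [Real.sin_sq_add_cos_sq (c / 2)]
        rw [hm, h1]; ring
      have hμbound : ∀ i, μ i = 0 ∨ m ≤ μ i := by
        intro i
        obtain ⟨l, hl⟩ := hμform i
        by_cases hθl : θ l = 0
        · left; rw [hl, hθl]; simp
        · right
          have h1 : c ≤ |θ l| := hmin l hθl
          have h2 : Real.cos (θ l) = Real.cos |θ l| := (Real.cos_abs (θ l)).symm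
          have h3 : Real.cos |θ l| ≤ Real.cos c :=
            Real.cos_le_cos_of_nonneg_of_le_pi hc.le (hθ l) h1
          rw [hl, hm, h2]
          linarith
      have hrepr0 : ∀ i, μ i = 0 → e.repr u i = 0 := by
        intro i h0
        rw [e.repr_apply_apply]
        exact (Submodule.mem_orthogonal K u).mp huK (e i) (hKe i h0)
      have hquad_lower : m * ‖u‖ ^ 2 ≤ (inner ℝ (B u) u : ℝ) := by
        have h1 : (inner ℝ (B u) u : ℝ) = ∑ i, μ i * (e.repr u i) ^ 2 := by
          rw [← LinearIsometryEquiv.inner_map_map e.repr (B u) u, inner_dot]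
          apply Finset.sum_congr rfl
          intro i _
          have h2 : e.repr (B u) i = μ i * e.repr u i := by
            rw [e.repr_apply_apply, e.repr_apply_apply, ← hBsymm (e i) u, heig i,
              real_inner_smul_left]
          rw [h2]; ring
        have h3 : ‖u‖ ^ 2 = ∑ i, (e.repr u i) ^ 2 := by
          rw [← real_inner_self_eq_norm_sq, ← LinearIsometryEquiv.inner_map_map e.repr u u,
            inner_dot]
          exact Finset.sum_congr rfl fun i _ => (sq (e.repr u i)) ▸ rfl
        rw [h1, h3, Finset.mul_sum]
        apply Finset.sum_le_sum
        intro i _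
        rcases hμbound i with h | h
        · rw [hrepr0 i h, h]; ring_nf; exact le_refl 0
        · exact mul_le_mul_of_nonneg_right h (sq_nonneg _)
      have hBu : (inner ℝ (B u) u : ℝ) = ‖v‖ ^ 2 := by rw [hBquad u, hu]
      have hkey : 2 * Real.sin (c / 2) * ‖u‖ ≤ ‖v‖ := by
        have h3 : (2 * Real.sin (c / 2) * ‖u‖) ^ 2 ≤ ‖v‖ ^ 2 := by
          rw [mul_pow, ← hm4]
          calc m * ‖u‖ ^ 2 ≤ (inner ℝ (B u) u : ℝ) := hquad_lower
            _ = ‖v‖ ^ 2 := hBu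
        have h4 : 0 ≤ 2 * Real.sin (c / 2) * ‖u‖ := by positivity
        nlinarith [norm_nonneg v]
      have hcs : c ≤ Real.pi * Real.sin (c / 2) := by
        rw [div_le_iff₀ Real.pi_pos] at hsin
        linarith
      have h2u : 2 * ‖u‖ * c ≤ Real.pi * ‖v‖ := by
        nlinarith [mul_le_mul_of_nonneg_left hkey Real.pi_pos.le,
          mul_le_mul_of_nonneg_left hcs (by positivity : (0:ℝ) ≤ 2 * ‖u‖)]
      -- conclude
      have hNpos : (0:ℝ) < N := by
        have : (1:ℝ) ≤ N := by exact_mod_cast hN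
        linarith
      rw [norm_smul, Real.norm_eq_abs, abs_of_nonneg (by positivity),
        show WithLp.ofLp x0 - WithLp.ofLp xstar = WithLp.ofLp v from rfl, hsumE N]
      refine le_trans
        (mul_le_mul_of_nonneg_left (hsum_bound N) (by positivity : (0:ℝ) ≤ 1 / (N:ℝ))) ?_
      have hrhs : Real.pi / ((N:ℝ) * c) * ‖v‖ = Real.pi * ‖v‖ / ((N:ℝ) * c) := by ring
      rw [hrhs, le_div_iff₀ (by positivity : (0:ℝ) < (N:ℝ) * c)]
      have hl : 1 / (N:ℝ) * (2 * ‖u‖) * ((N:ℝ) * c) = 2 * ‖u‖ * c * ((N:ℝ) / (N:ℝ)) := by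
        ring
      rw [hl, div_self (ne_of_gt hNpos), mul_one]
      exact h2u
    · -- degenerate case: all θ l = 0, so v = 0
      have hθ0 : ∀ l, θ l = 0 := by
        intro l
        by_contra h
        exact hcπ ((hmin l h).trans (hθ l))
      have hμ0 : ∀ i, μ i = 0 := by
        intro i
        obtain ⟨l, hl⟩ := hμform i
        rw [hl, hθ0 l]; simp
      have hKtop : K = ⊤ := by
        rw [eq_top_iff, ← e.toBasis.span_eq, Submodule.span_le]
        rintro x ⟨i, rfl⟩
        simpa using hKe i (hμ0 i)
      have hv0 : v = 0 := by
        have : v ∈ (⊤ : Submodule ℝ (EuclideanSpace ℝ (Fin n)))ᗮ := hKtop ▸ hvK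
        rwa [Submodule.top_orthogonal_eq_bot, Submodule.mem_bot] at this
      have hu0 : u = 0 := by
        have : u ∈ (⊤ : Submodule ℝ (EuclideanSpace ℝ (Fin n)))ᗮ := hKtop ▸ huK
        rwa [Submodule.top_orthogonal_eq_bot, Submodule.mem_bot] at this
      rw [show WithLp.ofLp x0 - WithLp.ofLp xstar = WithLp.ofLp v from rfl, hsumE N, htel N, hu0, hv0]
      simp
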